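/- In the quotient of the partition algebra P_n(δ) by the ideal J spanned by diagrams with fewer than n propagating blocks, the image of the half-integer Jucys-Murphy element L_{i+1/2} equals the scalar i (times the identity), for all i ≥ 0. -/
import Mathlib


/-- Lemma 6.2(iv) of the paper: in the quotient of the partition algebra
`P_n(δ)` by the ideal `J = J_n^{(n-1)}` of diagrams with fewer than `n` propagating
blocks (modelled by the algebra homomorphism `φ` onto the group algebra `F S_n`,
killing the diagrams `p_{i+1/2}` and `p_i` and sending `s_{i,j}` to the transposition
`(i j)`), the image of the half-integer Jucys–Murphy element `L_{i+1/2}` is the scalar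
`i` (times the identity), for all `i ≥ 0`.  Here `s i j` denotes `s_{i,j}`, `pH i`
denotes `p_{i+1/2}`, `pp i` denotes `p_i`, `L i` denotes `L_i`, `sig i` denotes `σ_i`,
`LH i` denotes `L_{i+1/2}` and `sigH i` denotes `σ_{i+1/2}`. -/
theorem jm_half_integer_image_in_quotient {F A : Type*} [Field F] [Ring A] [Algebra F A]
    (n : ℕ) (δ : F)
    (s : ℕ → ℕ → A) (pH : ℕ → A) (pp : ℕ → A)
    (L : ℕ → A) (sig : ℕ → A) (LH : ℕ → A) (sigH : ℕ → A)
    (φ : A →ₐ[F] MonoidAlgebra F (Equiv.Perm ℕ))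
    (hs : ∀ i j, φ (s i j) = MonoidAlgebra.of F (Equiv.Perm ℕ) (Equiv.swap i j))
    (hpH : ∀ i, φ (pH i) = 0)
    (hpp : ∀ i, φ (pp i) = 0)
    (hL0 : L 0 = 0) (hL1 : L 1 = pp 1)
    (hsig1 : sig 1 = 1) (hsig2 : sig 2 = s 1 2)
    (hLrec : ∀ i, 1 ≤ i →
      L (i + 1) = -(s i (i + 1) * L i * pH i) - pH i * L i * s i (i + 1)
        + pH i * L i * pp (i + 1) * pH i + s i (i + 1) * L i * s i (i + 1) + sig (i + 1))
    (hsigrec : ∀ i, 2 ≤ i →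
      sig (i + 1) = s (i - 1) i * s i (i + 1) * sig i * s i (i + 1) * s (i + 1) (i + 2)
        + s i (i + 1) * pH (i - 1) * L (i - 1) * s i (i + 1) * pH (i - 1)
        + pH (i - 1) * L (i - 1) * s i (i + 1) * pH (i - 1)
        - s i (i + 1) * pH (i - 1) * L (i - 1) * s (i - 1) i * pH i * pp i * pH (i - 1)
        - pH (i - 1) * pp i * pH i * s (i - 1) i * L (i - 1) * pH (i - 1) * s i (i + 1))
    (hLH0 : LH 0 = 0)
    (hsigH0 : sigH 0 = 1) (hsigH1 : sigH 1 = 1)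
    (hLHrec : ∀ i, 1 ≤ i →
      LH i = -(L i * pH i) - pH i * L i + pH i * L i * pp i * pH i
        + s i (i + 1) * LH (i - 1) * s i (i + 1) + sigH i)
    (hsigHrec : ∀ i, 2 ≤ i →
      sigH i = s (i - 1) i * s i (i + 1) * sigH (i - 1) * s i (i + 1) * s (i - 1) i
        + pH (i - 1) * L (i - 1) * s i (i + 1) * pH (i - 1) * s i (i + 1)
        + s i (i + 1) * pH (i - 1) * L (i - 1) * s i (i + 1) * pH (i - 1)
        - pH (i - 1) * L (i - 1) * s (i - 1) i * pH i * pp i * pH (i - 1)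
        - s i (i + 1) * pH (i - 1) * pp i * pH i * s (i - 1) i * L (i - 1) * pH (i - 1) * s i (i + 1)) :
    ∀ i : ℕ, φ (LH i) = (i : MonoidAlgebra F (Equiv.Perm ℕ)) := by

  have hu : ∀ a b, φ (s a b) * φ (s a b) = 1 := by
    intro a b
    rw [hs, ← map_mul, Equiv.swap_mul_self, map_one]
  have hsigHall : ∀ i, φ (sigH i) = 1 := by
    intro i
    induction i using Nat.strong_induction_on with
    | _ i ih =>
      match i, ih with
      | 0, _ => rw [hsigH0, map_one]
      | 1, _ => rw [hsigH1, map_one]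
      | (k+2), ih =>
        rw [hsigHrec (k+2) (by omega)]
        have h1 : k + 2 - 1 = k + 1 := rfl
        rw [h1]
        simp only [map_add, map_sub, map_mul, hpH, hpp, mul_zero, zero_mul,
          add_zero, sub_zero, ih (k+1) (by omega), mul_one]
        rw [mul_assoc (φ (s (k+1) (k+2))), hu, mul_one, hu]
  intro i
  induction i using Nat.strong_induction_on with
  | _ i ih =>
    match i, ih with
    | 0, _ => rw [hLH0, map_zero, Nat.cast_zero]
    | (k+1), ih =>
      rw [hLHrec (k+1) (by omega)]
      have h1 : k + 1 - 1 = k := rfl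
      rw [h1]
      simp only [map_add, map_sub, map_neg, map_mul, hpH, hpp, mul_zero, zero_mul,
        neg_zero, sub_zero, zero_sub, zero_add, ih k (by omega), hsigHall]
      rw [show φ (s (k+1) (k+2)) * (k : MonoidAlgebra F (Equiv.Perm ℕ))
            = (k : MonoidAlgebra F (Equiv.Perm ℕ)) * φ (s (k+1) (k+2)) from
          (Nat.cast_commute k _).symm.eq,
        mul_assoc, hu, mul_one]
      push_cast
      ring
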